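/- For every integer r ≥ 3 and integers n₁ ≥ n₂ ≥ ⋯ ≥ n_r ≥ 1, there exists an edge-coloring of the complete r-partite graph K_{n₁,n₂,…,n_r} using exactly n₁ + n₂ + ⋯ + n_r + t − 1 colors that contains no rainbow 4-cycle, where t = min{ ⌊(n₁+⋯+n_r)/3⌋, ⌊(n₂+⋯+n_r)/2⌋, n₃+⋯+n_r }. -/

import Mathlib

open Finset

/-- The complete `r`-partite graph with parts of sizes `n 0, n 1, …, n (r-1)`. -/
def Kpartite (r : ℕ) (n : ℕ → ℕ) : SimpleGraph ((i : Fin r) × Fin (n i)) :=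
  SimpleGraph.completeMultipartiteGraph fun i : Fin r => Fin (n i)

/-- The edge-coloring `c` contains a rainbow 3-cycle in `G`. -/
def RainbowC3 {V α : Type*} (G : SimpleGraph V) (c : Sym2 V → α) : Prop :=
  ∃ a b d : V, G.Adj a b ∧ G.Adj b d ∧ G.Adj d a ∧
    c s(a, b) ≠ c s(b, d) ∧ c s(b, d) ≠ c s(d, a) ∧ c s(a, b) ≠ c s(d, a)

/-- The edge-coloring `c` contains a rainbow 4-cycle in `G`. -/
def RainbowC4 {V α : Type*} (G : SimpleGraph V) (c : Sym2 V → α) : Prop :=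
  ∃ a b d e : V, G.Adj a b ∧ G.Adj b d ∧ G.Adj d e ∧ G.Adj e a ∧
    a ≠ d ∧ b ≠ e ∧
    c s(a, b) ≠ c s(b, d) ∧ c s(a, b) ≠ c s(d, e) ∧ c s(a, b) ≠ c s(e, a) ∧
    c s(b, d) ≠ c s(d, e) ∧ c s(b, d) ≠ c s(e, a) ∧ c s(d, e) ≠ c s(e, a)

/-- The coloring `c` uses every one of the `k` colors on at least one edge of `G`
(i.e. it uses exactly `k` colors). -/
def SurjOnEdges {V : Type*} {k : ℕ} (G : SimpleGraph V) (c : Sym2 V → Fin k) : Prop :=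
  ∀ i : Fin k, ∃ e ∈ G.edgeSet, c e = i

namespace RC4

variable (r : ℕ) (n : ℕ → ℕ)

abbrev V := (i : Fin r) × Fin (n i)

def NN : ℕ := ∑ i ∈ Finset.range r, n i
def tt : ℕ := min (min (NN r n / 3) ((∑ i ∈ Finset.Ico 1 r, n i) / 2)) (∑ i ∈ Finset.Ico 2 r, n i)
def m (i : ℕ) : ℕ := min (n i) (tt r n)
def off (i : ℕ) : ℕ := ∑ j ∈ Finset.range i, m r n j
def offN (r : ℕ) (n : ℕ → ℕ) (i : ℕ) : ℕ := ∑ j ∈ Finset.range i, n j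

variable {r n}

lemma m_le_tt (i : ℕ) : m r n i ≤ tt r n := min_le_right _ _
lemma m_le_n (i : ℕ) : m r n i ≤ n i := min_le_left _ _

lemma off_succ (i : ℕ) : off r n (i + 1) = off r n i + m r n i :=
  Finset.sum_range_succ _ _

lemma off_mono : Monotone (off r n) := fun _ _ h =>
  Finset.sum_le_sum_of_subset (Finset.range_subset_range.2 h)

lemma offN_succ (i : ℕ) : offN r n (i + 1) = offN r n i + n i :=
  Finset.sum_range_succ _ _

lemma offN_mono : Monotone (offN r n) := fun _ _ h =>
  Finset.sum_le_sum_of_subset (Finset.range_subset_range.2 h)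

lemma offN_r : offN r n r = NN r n := rfl

variable (r n)

def pos (v : V r n) : ℕ := off r n v.1 + v.2

def sel (v : V r n) : Prop := (v.2 : ℕ) < m r n v.1 ∧ pos r n v < 3 * tt r n

instance : DecidablePred (sel r n) := fun _ => instDecidableAnd

def grp (v : V r n) : ℕ := pos r n v % tt r n

noncomputable def pi (v : V r n) : ℕ :=
  if sel r n v then NN r n + grp r n v else offN r n v.1 + v.2

def samegrp (x y : V r n) : Prop := sel r n x ∧ sel r n y ∧ grp r n x = grp r n y

instance : ∀ x y, Decidable (samegrp r n x y) := fun _ _ => instDecidableAnd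

noncomputable def c0 : Sym2 (V r n) → Sym2 (V r n) ⊕ ℕ :=
  Sym2.lift ⟨fun x y => if samegrp r n x y then Sum.inl s(x, y)
      else Sum.inr (min (pi r n x) (pi r n y)), by
    intro x y
    dsimp only
    by_cases h : samegrp r n x y
    · have h' : samegrp r n y x := ⟨h.2.1, h.1, h.2.2.symm⟩
      rw [if_pos h, if_pos h', Sym2.eq_swap]
    · have h' : ¬ samegrp r n y x := fun hc => h ⟨hc.2.1, hc.1, hc.2.2.symm⟩
      rw [if_neg h, if_neg h', min_comm]⟩

variable {r n}

lemma c0_mk (x y : V r n) : c0 r n s(x, y) =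
    if samegrp r n x y then Sum.inl s(x, y)
    else Sum.inr (min (pi r n x) (pi r n y)) := rfl

lemma pos_lt_off_succ (v : V r n) (h : (v.2 : ℕ) < m r n v.1) :
    pos r n v < off r n (v.1 + 1) := by
  rw [off_succ]; exact Nat.add_lt_add_left h _

lemma posInj {x y : V r n} (hx : sel r n x) (hy : sel r n y)
    (h : pos r n x = pos r n y) : x = y := by
  obtain ⟨⟨i, hi⟩, j⟩ := x
  obtain ⟨⟨i', hi'⟩, j'⟩ := y
  have hii : i = i' := by
    rcases lt_trichotomy i i' with hlt | he | hlt
    · exfalso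
      have h1 : pos r n ⟨⟨i, hi⟩, j⟩ < off r n (i + 1) := pos_lt_off_succ _ hx.1
      have h2 : off r n (i + 1) ≤ off r n i' := off_mono hlt
      have h3 : off r n i' ≤ pos r n ⟨⟨i', hi'⟩, j'⟩ := Nat.le_add_right _ _
      omega
    · exact he
    · exfalso
      have h1 : pos r n ⟨⟨i', hi'⟩, j'⟩ < off r n (i' + 1) := pos_lt_off_succ _ hy.1
      have h2 : off r n (i' + 1) ≤ off r n i := off_mono hlt
      have h3 : off r n i ≤ pos r n ⟨⟨i, hi⟩, j⟩ := Nat.le_add_right _ _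
      omega
  subst hii
  have : (j : ℕ) = (j' : ℕ) := by
    have := h; unfold pos at this; simpa using this
  exact congrArg _ (Fin.ext this)

lemma pi_lt_of_not_sel {x : V r n} (hx : ¬ sel r n x) : pi r n x < NN r n := by
  rw [pi, if_neg hx]
  calc offN r n x.1 + (x.2 : ℕ) < offN r n (x.1 + 1) := by
        rw [offN_succ]; exact Nat.add_lt_add_left x.2.2 _
    _ ≤ offN r n r := offN_mono x.1.2
    _ = NN r n := rfl

lemma pi_of_sel {x : V r n} (hx : sel r n x) : pi r n x = NN r n + grp r n x :=
  if_pos hx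

lemma NN_le_pi_of_sel {x : V r n} (hx : sel r n x) : NN r n ≤ pi r n x := by
  rw [pi_of_sel hx]; exact Nat.le_add_right _ _

lemma piInjNotSel {x y : V r n} (hx : ¬ sel r n x) (hy : ¬ sel r n y)
    (h : pi r n x = pi r n y) : x = y := by
  rw [pi, if_neg hx, pi, if_neg hy] at h
  obtain ⟨⟨i, hi⟩, j⟩ := x
  obtain ⟨⟨i', hi'⟩, j'⟩ := y
  have hii : i = i' := by
    rcases lt_trichotomy i i' with hlt | he | hlt
    · exfalso
      have h1 : offN r n i + (j : ℕ) < offN r n (i + 1) := by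
        rw [offN_succ]; exact Nat.add_lt_add_left j.2 _
      have h2 : offN r n (i + 1) ≤ offN r n i' := offN_mono hlt
      simp only at h; omega
    · exact he
    · exfalso
      have h1 : offN r n i' + (j' : ℕ) < offN r n (i' + 1) := by
        rw [offN_succ]; exact Nat.add_lt_add_left j'.2 _
      have h2 : offN r n (i' + 1) ≤ offN r n i := offN_mono hlt
      simp only at h; omega
  subst hii
  simp only [add_right_inj] at h
  exact congrArg _ (Fin.ext h)

lemma pi_eq_of_samegrp {x y : V r n} (h : samegrp r n x y) : pi r n x = pi r n y := by
  rw [pi_of_sel h.1, pi_of_sel h.2.1, h.2.2]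

lemma samegrp_part_ne {x y : V r n} (h : samegrp r n x y) (hne : x ≠ y) :
    x.1 ≠ y.1 := by
  intro hpart
  obtain ⟨hx, hy, hg⟩ := h
  have hpos : pos r n x ≠ pos r n y := fun hp => hne (posInj hx hy hp)
  have hx2 : pos r n x < off r n x.1 + m r n x.1 := Nat.add_lt_add_left hx.1 _
  have hy2 : pos r n y < off r n x.1 + m r n x.1 := by
    have : pos r n y < off r n y.1 + m r n y.1 := Nat.add_lt_add_left hy.1 _
    rwa [← hpart] at this
  have hx1 : off r n x.1 ≤ pos r n x := Nat.le_add_right _ _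
  have hy1 : off r n x.1 ≤ pos r n y := by
    have : off r n y.1 ≤ pos r n y := Nat.le_add_right _ _
    rwa [← hpart] at this
  have hm : m r n x.1 ≤ tt r n := m_le_tt _
  have hmod : pos r n x % tt r n = pos r n y % tt r n := hg
  rcases Nat.lt_or_ge (pos r n x) (pos r n y) with hlt | hge
  · have hdvd : tt r n ∣ pos r n y - pos r n x :=
      (Nat.modEq_iff_dvd' hlt.le).1 hmod
    have := Nat.le_of_dvd (by omega) hdvd
    omega
  · have hlt : pos r n y < pos r n x := by omega
    have hdvd : tt r n ∣ pos r n x - pos r n y :=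
      (Nat.modEq_iff_dvd' hlt.le).1 hmod.symm
    have := Nat.le_of_dvd (by omega) hdvd
    omega

lemma grp_lt {x : V r n} (htt : 0 < tt r n) : grp r n x < tt r n :=
  Nat.mod_lt _ htt

lemma pos_cases {x : V r n} (hx : sel r n x) (htt : 0 < tt r n) :
    pos r n x = grp r n x ∨ pos r n x = grp r n x + tt r n ∨
      pos r n x = grp r n x + 2 * tt r n := by
  have h1 := Nat.div_add_mod (pos r n x) (tt r n)
  have h2 : pos r n x / tt r n < 3 := by
    rw [Nat.div_lt_iff_lt_mul htt]
    have := hx.2; omega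
  have hg : grp r n x = pos r n x % tt r n := rfl
  interval_cases h : pos r n x / tt r n <;> omega

lemma no4 {a b c d : V r n} (htt : 0 < tt r n)
    (hab : samegrp r n a b) (hac : samegrp r n a c) (had : samegrp r n a d)
    (h1 : a ≠ b) (h2 : a ≠ c) (h3 : a ≠ d) (h4 : b ≠ c) (h5 : b ≠ d) (h6 : c ≠ d) :
    False := by
  have hsa := hab.1
  have hsb := hab.2.1
  have hsc := hac.2.1
  have hsd := had.2.1
  have gab : grp r n a = grp r n b := hab.2.2
  have gac : grp r n a = grp r n c := hac.2.2
  have gad : grp r n a = grp r n d := had.2.2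
  have pab : pos r n a ≠ pos r n b := fun h => h1 (posInj hsa hsb h)
  have pac : pos r n a ≠ pos r n c := fun h => h2 (posInj hsa hsc h)
  have pad : pos r n a ≠ pos r n d := fun h => h3 (posInj hsa hsd h)
  have pbc : pos r n b ≠ pos r n c := fun h => h4 (posInj hsb hsc h)
  have pbd : pos r n b ≠ pos r n d := fun h => h5 (posInj hsb hsd h)
  have pcd : pos r n c ≠ pos r n d := fun h => h6 (posInj hsc hsd h)
  have ca := pos_cases hsa htt
  have cb := pos_cases hsb htt
  have cc := pos_cases hsc htt
  have cd := pos_cases hsd htt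
  rw [← gab] at cb
  rw [← gac] at cc
  rw [← gad] at cd
  rcases ca with h|h|h <;> rcases cb with hb1|hb1|hb1 <;> rcases cc with hc1|hc1|hc1 <;>
    rcases cd with hd1|hd1|hd1 <;> omega

lemma not_samegrp_left {x y : V r n} (hx : ¬ sel r n x) : ¬ samegrp r n x y :=
  fun h => hx h.1

lemma samegrp_symm {x y : V r n} (h : samegrp r n x y) : samegrp r n y x :=
  ⟨h.2.1, h.1, h.2.2.symm⟩

lemma samegrp_trans {x y z : V r n} (h : samegrp r n x y) (h' : samegrp r n y z) :
    samegrp r n x z := ⟨h.1, h'.2.1, h.2.2.trans h'.2.2⟩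

/-- The key lemma: a 4-cycle whose first vertex has minimal `pi` value is not rainbow. -/
lemma key {a b d e : V r n} (htt : 0 < tt r n)
    (hab : a.1 ≠ b.1) (hbd : b.1 ≠ d.1) (hde : d.1 ≠ e.1) (hea : e.1 ≠ a.1)
    (had : a ≠ d) (hbe : b ≠ e)
    (hmb : pi r n a ≤ pi r n b) (hmd : pi r n a ≤ pi r n d) (hme : pi r n a ≤ pi r n e)
    (h1 : c0 r n s(a, b) ≠ c0 r n s(b, d)) (h2 : c0 r n s(a, b) ≠ c0 r n s(d, e))
    (h3 : c0 r n s(a, b) ≠ c0 r n s(e, a)) (h4 : c0 r n s(b, d) ≠ c0 r n s(d, e))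
    (h5 : c0 r n s(b, d) ≠ c0 r n s(e, a)) (h6 : c0 r n s(d, e) ≠ c0 r n s(e, a)) :
    False := by
  have nab : a ≠ b := fun h => hab (congrArg Sigma.fst h)
  have nbd : b ≠ d := fun h => hbd (congrArg Sigma.fst h)
  have nde : d ≠ e := fun h => hde (congrArg Sigma.fst h)
  have nea : e ≠ a := fun h => hea (congrArg Sigma.fst h)
  by_cases gab : samegrp r n a b
  · have piab : pi r n b = pi r n a := (pi_eq_of_samegrp gab).symm
    by_cases gae : samegrp r n a e
    · -- a, b, e in one group; then d is not in the group
      have piae : pi r n e = pi r n a := (pi_eq_of_samegrp gae).symm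
      have gbd' : ¬ samegrp r n b d := fun h => no4 htt gab gae
        (samegrp_trans gab h) nab nea.symm had hbe nbd nde.symm
      have gde' : ¬ samegrp r n d e := fun h => no4 htt gab gae
        (samegrp_trans gae (samegrp_symm h)) nab nea.symm had hbe nbd nde.symm
      apply h4
      rw [c0_mk, if_neg gbd', c0_mk, if_neg gde']
      congr 1
      rw [piab, piae, min_eq_left hmd, min_eq_right hmd]
    · by_cases gbd : samegrp r n b d
      · -- a, b, d in one group
        have pibd : pi r n d = pi r n a := by
          rw [← pi_eq_of_samegrp gbd, piab]
        have gde' : ¬ samegrp r n d e := fun h => no4 htt gab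
          (samegrp_trans gab gbd)
          (samegrp_trans (samegrp_trans gab gbd) h)
          nab had nea.symm nbd hbe nde
        have gea' : ¬ samegrp r n e a := fun h => gae (samegrp_symm h)
        apply h6
        rw [c0_mk, if_neg gde', c0_mk, if_neg gea']
        congr 1
        rw [pibd, min_eq_left hme, min_eq_right hme]
      · -- edges (b,d) and (e,a) both get color `inr (pi a)`
        have gea' : ¬ samegrp r n e a := fun h => gae (samegrp_symm h)
        apply h5
        rw [c0_mk, if_neg gbd, c0_mk, if_neg gea']
        congr 1
        rw [piab, min_eq_left hmd, min_eq_right hme]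
  · by_cases gae : samegrp r n a e
    · have piae : pi r n e = pi r n a := (pi_eq_of_samegrp gae).symm
      by_cases ged : samegrp r n d e
      · -- a, e, d in one group
        have pied : pi r n d = pi r n a := by
          rw [pi_eq_of_samegrp ged, piae]
        have gbd' : ¬ samegrp r n b d := fun h => no4 htt gae
          (samegrp_trans gae (samegrp_symm ged))
          (samegrp_trans (samegrp_trans gae (samegrp_symm ged)) (samegrp_symm h))
          nea.symm had nab nde.symm hbe.symm nbd.symm
        apply h1
        rw [c0_mk, if_neg gab, c0_mk, if_neg gbd']
        congr 1
        rw [pied, min_eq_left hmb, min_eq_right hmb]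
      · -- edges (a,b) and (d,e) both get color `inr (pi a)`
        apply h2
        rw [c0_mk, if_neg gab, c0_mk, if_neg ged]
        congr 1
        rw [piae, min_eq_left hmb, min_eq_right hmd]
    · -- the two edges at `a` both get color `inr (pi a)`
      have gea' : ¬ samegrp r n e a := fun h => gae (samegrp_symm h)
      apply h3
      rw [c0_mk, if_neg gab, c0_mk, if_neg gea']
      congr 1
      rw [min_eq_left hmb, min_eq_right hme]

/-- The coloring `c0` contains no rainbow `C₄`. -/
lemma noRainbowC4_c0 (htt : 0 < tt r n) : ¬ RainbowC4 (Kpartite r n) (c0 r n) := by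
  rintro ⟨a, b, d, e, hab, hbd, hde, hea, had, hbe, h1, h2, h3, h4, h5, h6⟩
  have hab' : a.1 ≠ b.1 := hab
  have hbd' : b.1 ≠ d.1 := hbd
  have hde' : d.1 ≠ e.1 := hde
  have hea' : e.1 ≠ a.1 := hea
  have hmin : (pi r n a ≤ pi r n b ∧ pi r n a ≤ pi r n d ∧ pi r n a ≤ pi r n e) ∨
      (pi r n b ≤ pi r n d ∧ pi r n b ≤ pi r n e ∧ pi r n b ≤ pi r n a) ∨
      (pi r n d ≤ pi r n e ∧ pi r n d ≤ pi r n a ∧ pi r n d ≤ pi r n b) ∨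
      (pi r n e ≤ pi r n a ∧ pi r n e ≤ pi r n b ∧ pi r n e ≤ pi r n d) := by omega
  rcases hmin with ⟨m1, m2, m3⟩ | ⟨m1, m2, m3⟩ | ⟨m1, m2, m3⟩ | ⟨m1, m2, m3⟩
  · exact key htt hab' hbd' hde' hea' had hbe m1 m2 m3 h1 h2 h3 h4 h5 h6
  · -- rotate: (b, d, e, a)
    exact key htt hbd' hde' hea' hab' hbe had.symm m1 m2 m3 h4 h5
      (fun h => h1 h.symm) h6 (fun h => h2 h.symm) (fun h => h3 h.symm)
  · -- rotate: (d, e, a, b)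
    exact key htt hde' hea' hab' hbd' had.symm hbe.symm m1 m2 m3 h6
      (fun h => h2 h.symm) (fun h => h4 h.symm) (fun h => h3 h.symm) (fun h => h5 h.symm) h1
  · -- rotate: (e, a, b, d)
    exact key htt hea' hab' hbd' hde' hbe.symm had m1 m2 m3
      (fun h => h3 h.symm) (fun h => h5 h.symm) (fun h => h6 h.symm) h1 h2 h4

section Counting

variable (hr : 3 ≤ r) (hmono : ∀ i j : ℕ, i ≤ j → j < r → n j ≤ n i)
    (hpos : ∀ i : ℕ, i < r → 1 ≤ n i)

include hr hpos in
lemma NN_ge : r ≤ NN r n := by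
  calc r = ∑ _i ∈ Finset.range r, 1 := by simp
  _ ≤ NN r n := Finset.sum_le_sum fun i hi => hpos i (Finset.mem_range.1 hi)

include hr hpos in
lemma tt_pos : 0 < tt r n := by
  have h1 : 3 ≤ NN r n := le_trans hr (NN_ge hr hpos)
  have h2 : 2 ≤ ∑ i ∈ Finset.Ico 1 r, n i := by
    calc 2 ≤ ∑ _i ∈ Finset.Ico 1 r, 1 := by
          rw [Finset.sum_const, Nat.card_Ico, smul_eq_mul, mul_one]; omega
    _ ≤ _ := Finset.sum_le_sum fun i hi => hpos i (Finset.mem_Ico.1 hi).2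
  have h3 : 1 ≤ ∑ i ∈ Finset.Ico 2 r, n i := by
    calc 1 ≤ ∑ _i ∈ Finset.Ico 2 r, 1 := by
          rw [Finset.sum_const, Nat.card_Ico, smul_eq_mul, mul_one]; omega
    _ ≤ _ := Finset.sum_le_sum fun i hi => hpos i (Finset.mem_Ico.1 hi).2
  have : 1 ≤ NN r n / 3 := (Nat.one_le_div_iff (by norm_num)).2 h1
  have : 1 ≤ (∑ i ∈ Finset.Ico 1 r, n i) / 2 := (Nat.one_le_div_iff (by norm_num)).2 h2
  unfold tt; omega

lemma three_tt_le_NN : 3 * tt r n ≤ NN r n := by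
  have h : tt r n ≤ NN r n / 3 := le_trans (min_le_left _ _) (min_le_left _ _)
  have := Nat.div_mul_le_self (NN r n) 3
  omega

lemma two_tt_le : 2 * tt r n ≤ ∑ i ∈ Finset.Ico 1 r, n i := by
  have h : tt r n ≤ (∑ i ∈ Finset.Ico 1 r, n i) / 2 :=
    le_trans (min_le_left _ _) (min_le_right _ _)
  have := Nat.div_mul_le_self (∑ i ∈ Finset.Ico 1 r, n i) 2
  omega

lemma tt_le : tt r n ≤ ∑ i ∈ Finset.Ico 2 r, n i := min_le_right _ _

include hr in
lemma sum_m_Ico2 : tt r n ≤ ∑ i ∈ Finset.Ico 2 r, m r n i := by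
  by_cases hcase : ∃ i ∈ Finset.Ico 2 r, tt r n ≤ n i
  · obtain ⟨i, hi, hni⟩ := hcase
    calc tt r n = m r n i := (min_eq_right hni).symm
    _ ≤ _ := Finset.single_le_sum (fun j _ => Nat.zero_le _) hi
  · push_neg at hcase
    have : ∑ i ∈ Finset.Ico 2 r, m r n i = ∑ i ∈ Finset.Ico 2 r, n i :=
      Finset.sum_congr rfl fun i hi => min_eq_left (le_of_lt (hcase i hi))
    rw [this]; exact tt_le

include hr hmono in
lemma sum_m_Ico1 : 2 * tt r n ≤ ∑ i ∈ Finset.Ico 1 r, m r n i := by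
  by_cases h1 : tt r n ≤ n 1
  · rw [Finset.sum_eq_sum_Ico_succ_bot (by omega : 1 < r)]
    have hE : Finset.Ico (1 + 1) r = Finset.Ico 2 r := rfl
    rw [hE]
    have : m r n 1 = tt r n := min_eq_right h1
    have := sum_m_Ico2 hr (n := n)
    omega
  · push_neg at h1
    have : ∑ i ∈ Finset.Ico 1 r, m r n i = ∑ i ∈ Finset.Ico 1 r, n i :=
      Finset.sum_congr rfl fun i hi => by
        have hi' := Finset.mem_Ico.1 hi
        exact min_eq_left (le_of_lt (lt_of_le_of_lt (hmono 1 i hi'.1 hi'.2) h1))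
    rw [this]; exact two_tt_le

include hr hmono in
lemma three_tt_le_off : 3 * tt r n ≤ off r n r := by
  by_cases h0 : tt r n ≤ n 0
  · rw [off, Finset.range_eq_Ico, Finset.sum_eq_sum_Ico_succ_bot (by omega : 0 < r)]
    have hE : Finset.Ico (0 + 1) r = Finset.Ico 1 r := rfl
    rw [hE]
    have : m r n 0 = tt r n := min_eq_right h0
    have := sum_m_Ico1 hr hmono (n := n)
    omega
  · push_neg at h0
    have : off r n r = NN r n := Finset.sum_congr rfl fun i hi => by
      have hi' := Finset.mem_range.1 hi
      exact min_eq_left (le_of_lt (lt_of_le_of_lt (hmono 0 i (Nat.zero_le _) hi') h0))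
    rw [this]; exact three_tt_le_NN

end Counting

section Vert

variable (r n)

/-- index of the part containing the `k`-th selected position -/
def qq (k : ℕ) : ℕ := Nat.findGreatest (fun i => off r n i ≤ k) r

/-- the vertex at selected position `k` -/
def vert (hr : 3 ≤ r) (h1 : 1 ≤ n 0) (k : ℕ) : V r n :=
  if h : qq r n k < r ∧ k - off r n (qq r n k) < n (qq r n k) then
    ⟨⟨qq r n k, h.1⟩, ⟨k - off r n (qq r n k), h.2⟩⟩
  else ⟨⟨0, by omega⟩, ⟨0, h1⟩⟩

variable {r n}

lemma qq_spec {k : ℕ} (hk : k < off r n r) :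
    qq r n k < r ∧ off r n (qq r n k) ≤ k ∧ k < off r n (qq r n k + 1) := by
  have h0 : off r n 0 ≤ k := Nat.zero_le _
  have hle : off r n (qq r n k) ≤ k :=
    Nat.findGreatest_spec (P := fun i => off r n i ≤ k) (Nat.zero_le r) h0
  have hler : qq r n k ≤ r := Nat.findGreatest_le r
  have hlt : qq r n k < r := by
    rcases Nat.lt_or_ge (qq r n k) r with h | h
    · exact h
    · exfalso; have : qq r n k = r := le_antisymm hler h
      rw [this] at hle; omega
  refine ⟨hlt, hle, ?_⟩
  by_contra hcon
  push_neg at hcon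
  exact Nat.findGreatest_is_greatest (P := fun i => off r n i ≤ k)
    (Nat.lt_succ_self _) hlt hcon

lemma vert_spec (hr : 3 ≤ r) (h1 : 1 ≤ n 0) (hoff : 3 * tt r n ≤ off r n r)
    {k : ℕ} (hk : k < 3 * tt r n) :
    sel r n (vert r n hr h1 k) ∧ pos r n (vert r n hr h1 k) = k := by
  have hk' : k < off r n r := lt_of_lt_of_le hk hoff
  obtain ⟨hlt, hle, hsucc⟩ := qq_spec hk'
  rw [off_succ] at hsucc
  have hcond : qq r n k < r ∧ k - off r n (qq r n k) < n (qq r n k) :=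
    ⟨hlt, by have := m_le_n (r := r) (n := n) (qq r n k); omega⟩
  rw [vert, dif_pos hcond]
  have hpos : pos r n ⟨⟨qq r n k, hcond.1⟩, ⟨k - off r n (qq r n k), hcond.2⟩⟩ = k := by
    show off r n (qq r n k) + (k - off r n (qq r n k)) = k
    omega
  refine ⟨⟨?_, ?_⟩, hpos⟩
  · show k - off r n (qq r n k) < m r n (qq r n k)
    omega
  · rw [hpos]; exact hk

lemma vert_inj (hr : 3 ≤ r) (h1 : 1 ≤ n 0) (hoff : 3 * tt r n ≤ off r n r)
    {k k' : ℕ} (hk : k < 3 * tt r n) (hk' : k' < 3 * tt r n)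
    (h : vert r n hr h1 k = vert r n hr h1 k') : k = k' := by
  have e1 := (vert_spec hr h1 hoff hk).2
  have e2 := (vert_spec hr h1 hoff hk').2
  rw [← e1, ← e2, h]

lemma vert_grp (hr : 3 ≤ r) (h1 : 1 ≤ n 0) (hoff : 3 * tt r n ≤ off r n r)
    {k : ℕ} (hk : k < 3 * tt r n) : grp r n (vert r n hr h1 k) = k % tt r n := by
  rw [grp, (vert_spec hr h1 hoff hk).2]

/-- two selected vertices in the same part have positions within distance `< tt` -/
lemma same_part_close {x y : V r n} (hx : sel r n x) (hy : sel r n y)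
    (hpart : x.1 = y.1) (hle : pos r n x ≤ pos r n y) :
    pos r n y - pos r n x < tt r n := by
  have hx1 : off r n x.1 ≤ pos r n x := Nat.le_add_right _ _
  have hy2 : pos r n y < off r n x.1 + m r n x.1 := by
    have : pos r n y < off r n y.1 + m r n y.1 := Nat.add_lt_add_left hy.1 _
    rwa [← hpart] at this
  have := m_le_tt (r := r) (n := n) (x.1 : ℕ)
  omega

end Vert


lemma kpartite_adj {a b : V r n} : (Kpartite r n).Adj a b ↔ a.1 ≠ b.1 := by
  simp [Kpartite]

section Witness

variable (r n)
variable (hr : 3 ≤ r) (h1 : 1 ≤ n 0)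

/-- a vertex of the top group in a different part from `x` -/
def mate (x : V r n) : V r n :=
  if (x.1 : ℕ) = ((vert r n hr h1 (3 * tt r n - 1)).1 : ℕ) then
    vert r n hr h1 (2 * tt r n - 1)
  else vert r n hr h1 (3 * tt r n - 1)

def Wfun (nv : ℕ → V r n) (k : ℕ) : Sym2 (V r n) :=
  if k < 2 * tt r n then s(vert r n hr h1 k, vert r n hr h1 (k + tt r n))
  else if k < 3 * tt r n then s(vert r n hr h1 (k - 2 * tt r n), vert r n hr h1 k)
  else if k < 4 * tt r n - 1 then
    s(vert r n hr h1 (k - 3 * tt r n), mate r n hr h1 (vert r n hr h1 (k - 3 * tt r n)))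
  else s(nv (k - (4 * tt r n - 1)), mate r n hr h1 (nv (k - (4 * tt r n - 1))))

noncomputable def CVfun (nv : ℕ → V r n) (k : ℕ) : Sym2 (V r n) ⊕ ℕ :=
  if k < 2 * tt r n then Sum.inl s(vert r n hr h1 k, vert r n hr h1 (k + tt r n))
  else if k < 3 * tt r n then Sum.inl s(vert r n hr h1 (k - 2 * tt r n), vert r n hr h1 k)
  else if k < 4 * tt r n - 1 then Sum.inr (NN r n + (k - 3 * tt r n))
  else Sum.inr (pi r n (nv (k - (4 * tt r n - 1))))

variable {r n}
variable (htt : 0 < tt r n) (hoff : 3 * tt r n ≤ off r n r)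

include htt hoff in
lemma mate_sel (x : V r n) : sel r n (mate r n hr h1 x) := by
  rw [mate]
  split
  · exact (vert_spec hr h1 hoff (by omega)).1
  · exact (vert_spec hr h1 hoff (by omega)).1

include htt hoff in
lemma mate_grp (x : V r n) : grp r n (mate r n hr h1 x) = tt r n - 1 := by
  have e2 : (2 * tt r n - 1) % tt r n = tt r n - 1 := by
    have h : 2 * tt r n - 1 = (tt r n - 1) + 1 * tt r n := by omega
    rw [h, Nat.add_mul_mod_self_right]
    exact Nat.mod_eq_of_lt (by omega)
  have e3 : (3 * tt r n - 1) % tt r n = tt r n - 1 := by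
    have h : 3 * tt r n - 1 = (tt r n - 1) + 2 * tt r n := by omega
    rw [h, Nat.add_mul_mod_self_right]
    exact Nat.mod_eq_of_lt (by omega)
  rw [mate]
  split
  · rw [vert_grp hr h1 hoff (by omega), e2]
  · rw [vert_grp hr h1 hoff (by omega), e3]

include htt hoff in
lemma mate_pi (x : V r n) : pi r n (mate r n hr h1 x) = NN r n + (tt r n - 1) := by
  rw [pi_of_sel (mate_sel hr h1 htt hoff x), mate_grp hr h1 htt hoff x]

include htt hoff in
lemma vert_part_ne {p q : ℕ} (hp : p < 3 * tt r n) (hq : q < 3 * tt r n)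
    (hpq : p + tt r n ≤ q) : (vert r n hr h1 p).1 ≠ (vert r n hr h1 q).1 := by
  intro hpart
  have hsp := vert_spec hr h1 hoff hp
  have hsq := vert_spec hr h1 hoff hq
  have := same_part_close hsp.1 hsq.1 hpart (by rw [hsp.2, hsq.2]; omega)
  rw [hsp.2, hsq.2] at this
  omega

include htt hoff in
lemma mate_part (x : V r n) : x.1 ≠ (mate r n hr h1 x).1 := by
  rw [mate]
  split_ifs with hcond
  · intro h
    have h23 : (vert r n hr h1 (2 * tt r n - 1)).1 ≠ (vert r n hr h1 (3 * tt r n - 1)).1 :=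
      vert_part_ne hr h1 htt hoff (by omega) (by omega) (by omega)
    apply h23
    apply Fin.ext
    have hv : ((vert r n hr h1 (2 * tt r n - 1)).1 : ℕ) = (x.1 : ℕ) := by rw [← h]
    rw [hv, hcond]
  · exact fun h => hcond (congrArg (fun z : Fin r => (z : ℕ)) h)

include hr h1 htt hoff in
lemma sel_card : (Finset.univ.filter (sel r n)).card = 3 * tt r n := by
  have himg : (Finset.univ.filter (sel r n)).image (pos r n) = Finset.range (3 * tt r n) := by
    ext k
    simp only [Finset.mem_image, Finset.mem_filter, Finset.mem_univ, true_and,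
      Finset.mem_range]
    constructor
    · rintro ⟨v, hv, rfl⟩; exact hv.2
    · intro hk
      exact ⟨vert r n hr h1 k, (vert_spec hr h1 hoff hk).1, (vert_spec hr h1 hoff hk).2⟩
  have hinj : Set.InjOn (pos r n) (Finset.univ.filter (sel r n)) := by
    intro x hx y hy h
    simp only [Finset.coe_filter, Set.mem_setOf_eq] at hx hy
    exact posInj hx.2 hy.2 h
  have := Finset.card_image_of_injOn hinj
  rw [himg, Finset.card_range] at this
  omega

lemma card_V : Fintype.card (V r n) = NN r n := by
  rw [Fintype.card_sigma]
  simp only [Fintype.card_fin]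
  exact Fin.sum_univ_eq_sum_range _ _

include hr h1 htt hoff in
lemma notsel_card :
    (Finset.univ.filter (fun v => ¬ sel r n v)).card = NN r n - 3 * tt r n := by
  have h := Finset.card_filter_add_card_filter_not
    (s := (Finset.univ : Finset (V r n))) (p := sel r n)
  rw [Finset.card_univ, card_V, sel_card hr h1 htt hoff] at h
  omega

end Witness


section Witness2

variable (hr : 3 ≤ r) (h1 : 1 ≤ n 0)
variable {nv : ℕ → V r n}
variable (htt : 0 < tt r n) (hoff : 3 * tt r n ≤ off r n r) (h3N : 3 * tt r n ≤ NN r n)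

include htt hoff in
lemma W_mem_edge (nv : ℕ → V r n) (k : ℕ) :
    Wfun r n hr h1 nv k ∈ (Kpartite r n).edgeSet := by
  rw [Wfun]
  split_ifs with a1 a2 a3
  · rw [SimpleGraph.mem_edgeSet, kpartite_adj]
    exact vert_part_ne hr h1 htt hoff (by omega) (by omega) (by omega)
  · rw [SimpleGraph.mem_edgeSet, kpartite_adj]
    exact vert_part_ne hr h1 htt hoff (by omega) (by omega) (by omega)
  · rw [SimpleGraph.mem_edgeSet, kpartite_adj]
    exact mate_part hr h1 htt hoff _
  · rw [SimpleGraph.mem_edgeSet, kpartite_adj]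
    exact mate_part hr h1 htt hoff _

include htt hoff h3N in
lemma CV_eq (hnv1 : ∀ j, j < NN r n - 3 * tt r n → ¬ sel r n (nv j))
    (k : ℕ) (hk : k < NN r n + tt r n - 1) :
    c0 r n (Wfun r n hr h1 nv k) = CVfun r n hr h1 nv k := by
  rw [Wfun, CVfun]
  split_ifs with a1 a2 a3
  · rw [c0_mk, if_pos]
    exact ⟨(vert_spec hr h1 hoff (by omega)).1, (vert_spec hr h1 hoff (by omega)).1,
      by rw [vert_grp hr h1 hoff (by omega), vert_grp hr h1 hoff (by omega),
        Nat.add_mod_right]⟩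
  · rw [c0_mk, if_pos]
    refine ⟨(vert_spec hr h1 hoff (by omega)).1, (vert_spec hr h1 hoff (by omega)).1, ?_⟩
    rw [vert_grp hr h1 hoff (by omega), vert_grp hr h1 hoff (by omega)]
    conv_rhs => rw [show k = k - 2 * tt r n + tt r n * 2 by omega]
    rw [Nat.add_mul_mod_self_left]
  · rw [c0_mk, if_neg, mate_pi hr h1 htt hoff,
      pi_of_sel (vert_spec hr h1 hoff (by omega : k - 3 * tt r n < 3 * tt r n)).1,
      vert_grp hr h1 hoff (by omega)]
    · rw [Nat.mod_eq_of_lt (by omega)]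
      congr 1
      exact min_eq_left (by omega)
    · intro hsg
      have hg := hsg.2.2
      rw [vert_grp hr h1 hoff (by omega), mate_grp hr h1 htt hoff,
        Nat.mod_eq_of_lt (by omega)] at hg
      omega
  · have hj : k - (4 * tt r n - 1) < NN r n - 3 * tt r n := by omega
    rw [c0_mk, if_neg (not_samegrp_left (hnv1 _ hj)), mate_pi hr h1 htt hoff]
    congr 1
    have := pi_lt_of_not_sel (hnv1 _ hj)
    exact min_eq_left (by omega)

include htt hoff h3N in
lemma CV_inj (hnv1 : ∀ j, j < NN r n - 3 * tt r n → ¬ sel r n (nv j))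
    (hnv2 : ∀ j j', j < NN r n - 3 * tt r n → j' < NN r n - 3 * tt r n →
      nv j = nv j' → j = j')
    {k k' : ℕ} (hk : k < NN r n + tt r n - 1) (hk' : k' < NN r n + tt r n - 1)
    (h : CVfun r n hr h1 nv k = CVfun r n hr h1 nv k') : k = k' := by
  simp only [CVfun] at h
  split_ifs at h
  all_goals try (simp at h)
  all_goals try (simp only [Sum.inl.injEq, Sum.inr.injEq, Sym2.eq_iff] at h)
  all_goals try (rcases h with ⟨e1, e2⟩ | ⟨e1, e2⟩ <;>
    (have f1 := vert_inj hr h1 hoff (by omega) (by omega) e1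
     have f2 := vert_inj hr h1 hoff (by omega) (by omega) e2
     omega))
  all_goals try omega
  all_goals (first
    | (have heq := piInjNotSel (hnv1 (k - (4 * tt r n - 1)) (by omega))
          (hnv1 (k' - (4 * tt r n - 1)) (by omega)) h
       have := hnv2 _ _ (by omega) (by omega) heq
       omega)
    | (have hl := pi_lt_of_not_sel (hnv1 (k' - (4 * tt r n - 1)) (by omega))
       omega)
    | (have hl := pi_lt_of_not_sel (hnv1 (k - (4 * tt r n - 1)) (by omega))
       omega))

end Witness2

end RC4

/-- There is an edge-coloring of `K_{n₁,…,n_r}` with exactly `n₁+⋯+n_r + t − 1` colors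
and no rainbow `C₄`, where
`t = min{⌊(n₁+⋯+n_r)/3⌋, ⌊(n₂+⋯+n_r)/2⌋, n₃+⋯+n_r}`. -/
theorem exists_coloring_no_rainbow_C4 (r : ℕ) (n : ℕ → ℕ) (hr : 3 ≤ r)
    (hmono : ∀ i j : ℕ, i ≤ j → j < r → n j ≤ n i)
    (hpos : ∀ i : ℕ, i < r → 1 ≤ n i) :
    ∃ c : Sym2 ((i : Fin r) × Fin (n i)) →
      Fin ((∑ i ∈ Finset.range r, n i) +
        min (min ((∑ i ∈ Finset.range r, n i) / 3) ((∑ i ∈ Finset.Ico 1 r, n i) / 2))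
          (∑ i ∈ Finset.Ico 2 r, n i) - 1),
      SurjOnEdges (Kpartite r n) c ∧ ¬ RainbowC4 (Kpartite r n) c := by
  classical
  have h1 : 1 ≤ n 0 := hpos 0 (by omega)
  have htt : 0 < RC4.tt r n := RC4.tt_pos hr hpos
  have h3N : 3 * RC4.tt r n ≤ RC4.NN r n := RC4.three_tt_le_NN
  have hoff : 3 * RC4.tt r n ≤ RC4.off r n r := RC4.three_tt_le_off hr hmono
  have hNN : 3 ≤ RC4.NN r n := le_trans hr (RC4.NN_ge hr hpos)
  have hKpos : 0 < RC4.NN r n + RC4.tt r n - 1 := by omega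
  haveI : Inhabited (RC4.V r n) := ⟨⟨⟨0, by omega⟩, ⟨0, h1⟩⟩⟩
  set Rs : Finset (RC4.V r n) := Finset.univ.filter (fun v => ¬ RC4.sel r n v) with hRs
  have hRcard : Fintype.card Rs = RC4.NN r n - 3 * RC4.tt r n := by
    rw [Fintype.card_coe]; exact RC4.notsel_card hr h1 htt hoff
  let eR := Fintype.equivFinOfCardEq hRcard
  let nv : ℕ → RC4.V r n := fun j =>
    if h : j < RC4.NN r n - 3 * RC4.tt r n then (eR.symm ⟨j, h⟩ : RC4.V r n) else default
  have hnv_def : ∀ j (h : j < RC4.NN r n - 3 * RC4.tt r n),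
      nv j = (eR.symm ⟨j, h⟩ : RC4.V r n) := fun j h => dif_pos h
  have hnv1 : ∀ j, j < RC4.NN r n - 3 * RC4.tt r n → ¬ RC4.sel r n (nv j) := by
    intro j hj
    have hmem' : ¬ RC4.sel r n ((eR.symm ⟨j, hj⟩ : Rs) : RC4.V r n) :=
      (Finset.mem_filter.1 (eR.symm ⟨j, hj⟩).2).2
    rw [hnv_def j hj]
    exact hmem'
  have hnv2 : ∀ j j', j < RC4.NN r n - 3 * RC4.tt r n → j' < RC4.NN r n - 3 * RC4.tt r n →
      nv j = nv j' → j = j' := by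
    intro j j' hj hj' heq
    rw [hnv_def j hj, hnv_def j' hj'] at heq
    have h2 := eR.symm.injective (Subtype.coe_injective heq)
    exact congrArg Fin.val h2
  set K := RC4.NN r n + RC4.tt r n - 1 with hKdef
  let W : ℕ → Sym2 (RC4.V r n) := RC4.Wfun r n hr h1 nv
  let D : Finset (Sym2 (RC4.V r n) ⊕ ℕ) :=
    (Finset.range K).image (fun k => RC4.c0 r n (W k))
  have hDcard : Fintype.card D = K := by
    rw [Fintype.card_coe]
    rw [Finset.card_image_of_injOn, Finset.card_range]
    intro x hx y hy hxy
    rw [Finset.mem_coe, Finset.mem_range] at hx hy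
    have ex := RC4.CV_eq hr h1 htt hoff h3N hnv1 x hx
    have ey := RC4.CV_eq hr h1 htt hoff h3N hnv1 y hy
    exact RC4.CV_inj hr h1 htt hoff h3N hnv1 hnv2 hx hy (by
      rw [← ex, ← ey]; exact hxy)
  let eD := Fintype.equivFinOfCardEq hDcard
  let F : Sym2 (RC4.V r n) ⊕ ℕ → Fin K := fun x =>
    if h : x ∈ D then eD ⟨x, h⟩ else ⟨0, hKpos⟩
  refine ⟨fun e => F (RC4.c0 r n e), ?_, ?_⟩
  · intro i
    have hmem : ((eD.symm i : D) : Sym2 (RC4.V r n) ⊕ ℕ) ∈ D := (eD.symm i).2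
    rw [Finset.mem_image] at hmem
    obtain ⟨k, hk, hck⟩ := hmem
    rw [Finset.mem_range] at hk
    refine ⟨W k, RC4.W_mem_edge hr h1 htt hoff nv k, ?_⟩
    show F (RC4.c0 r n (W k)) = i
    have hmem2 : RC4.c0 r n (W k) ∈ D := by rw [hck]; exact (eD.symm i).2
    have hF : F (RC4.c0 r n (W k)) = eD ⟨_, hmem2⟩ := dif_pos hmem2
    rw [hF]
    have hsub : (⟨RC4.c0 r n (W k), hmem2⟩ : D) = eD.symm i := Subtype.ext hck
    rw [hsub]; exact Equiv.apply_symm_apply eD i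
  · intro hrb
    apply RC4.noRainbowC4_c0 htt
    obtain ⟨a, b, d, e, q1, q2, q3, q4, q5, q6, p1, p2, p3, p4, p5, p6⟩ := hrb
    exact ⟨a, b, d, e, q1, q2, q3, q4, q5, q6,
      fun h => p1 (congrArg F h), fun h => p2 (congrArg F h), fun h => p3 (congrArg F h),
      fun h => p4 (congrArg F h), fun h => p5 (congrArg F h), fun h => p6 (congrArg F h)⟩
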